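/- arXiv:1811.08384 — 2 statements merged into one kernel-verified Lean document; each statement's English description precedes it below -/
import Mathlib

section
/- The group presented as ⟨a, b | a·b·a = b·a·b, a⁻¹·b·a²·b = 1⟩ (the trefoil knot group with the framing-3 longitude λ = cab, c = a⁻¹ba, set equal to the identity) is isomorphic to the binary tetrahedral group presented as ⟨A, B, C | A³ = B³ = C² = A·B·C⟩. -/
/-- The relators of the presentation `⟨a, b | a·b·a = b·a·b, a⁻¹·b·a²·b = 1⟩`:
the trefoil knot group with the framing-3 longitude `λ = cab` (`c = a⁻¹ba`)
set equal to the identity. Generators: `a = of 0`, `b = of 1`. -/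
def trefoilFramingThreeRels : Set (FreeGroup (Fin 2)) :=
  { (FreeGroup.of 0 * FreeGroup.of 1 * FreeGroup.of 0) *
      (FreeGroup.of 1 * FreeGroup.of 0 * FreeGroup.of 1)⁻¹,
    (FreeGroup.of 0)⁻¹ * FreeGroup.of 1 * FreeGroup.of 0 ^ 2 * FreeGroup.of 1 }

/-- The relators of the presentation `⟨A, B, C | A³ = B³ = C² = A·B·C⟩` of the
binary tetrahedral group `⟨3,3,2⟩`. Generators: `A = of 0`, `B = of 1`, `C = of 2`. -/
def binaryTetrahedralRels : Set (FreeGroup (Fin 3)) :=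
  { FreeGroup.of 0 ^ 3 * (FreeGroup.of 1 ^ 3)⁻¹,
    FreeGroup.of 1 ^ 3 * (FreeGroup.of 2 ^ 2)⁻¹,
    FreeGroup.of 2 ^ 2 * (FreeGroup.of 0 * FreeGroup.of 1 * FreeGroup.of 2)⁻¹ }

lemma TrefSurg.relOne {α : Type*} (rels : Set (FreeGroup α)) {r : FreeGroup α} (h : r ∈ rels) :
    (QuotientGroup.mk r : PresentedGroup rels) = 1 := by
  rw [QuotientGroup.eq_one_iff]
  exact Subgroup.subset_normalClosure h

namespace TrefSurg

noncomputable abbrev a : PresentedGroup trefoilFramingThreeRels := PresentedGroup.of 0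
noncomputable abbrev b : PresentedGroup trefoilFramingThreeRels := PresentedGroup.of 1
noncomputable abbrev A : PresentedGroup binaryTetrahedralRels := PresentedGroup.of 0
noncomputable abbrev B : PresentedGroup binaryTetrahedralRels := PresentedGroup.of 1
noncomputable abbrev C : PresentedGroup binaryTetrahedralRels := PresentedGroup.of 2

lemma ht : a * b * a = b * a * b := by
  have := relOne trefoilFramingThreeRels (Set.mem_insert _ _)
  simp only [QuotientGroup.mk_mul, QuotientGroup.mk_inv] at this
  have h := mul_eq_one_iff_eq_inv.mp this
  rw [inv_inv] at h
  exact h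

lemma hr : b * a ^ 2 * b = a := by
  have h0 := relOne trefoilFramingThreeRels (Set.mem_insert_of_mem _ rfl)
  simp only [QuotientGroup.mk_mul, QuotientGroup.mk_inv, QuotientGroup.mk_pow] at h0
  have h1 : (a⁻¹ * b * a ^ 2 * b : PresentedGroup trefoilFramingThreeRels) = 1 := h0
  rw [show (a⁻¹ * b * a ^ 2 * b : PresentedGroup trefoilFramingThreeRels)
      = a⁻¹ * (b * a ^ 2 * b) by simp [mul_assoc], inv_mul_eq_one] at h1
  exact h1.symm

lemma hA3B3 : A ^ 3 = B ^ 3 := by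
  have := relOne binaryTetrahedralRels (Set.mem_insert _ _)
  simp only [QuotientGroup.mk_mul, QuotientGroup.mk_inv, QuotientGroup.mk_pow] at this
  have h := mul_eq_one_iff_eq_inv.mp this
  rw [inv_inv] at h
  exact h

lemma hB3C2 : B ^ 3 = C ^ 2 := by
  have := relOne binaryTetrahedralRels (Set.mem_insert_of_mem _ (Set.mem_insert _ _))
  simp only [QuotientGroup.mk_mul, QuotientGroup.mk_inv, QuotientGroup.mk_pow] at this
  have h := mul_eq_one_iff_eq_inv.mp this
  rw [inv_inv] at h
  exact h

lemma hC2 : C ^ 2 = A * B * C := by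
  have := relOne binaryTetrahedralRels
    (Set.mem_insert_of_mem _ (Set.mem_insert_of_mem _ rfl))
  simp only [QuotientGroup.mk_mul, QuotientGroup.mk_inv, QuotientGroup.mk_pow] at this
  have h := mul_eq_one_iff_eq_inv.mp this
  rw [inv_inv] at h
  exact h

lemma hAB : A * B = C := by
  have h : (A * B) * C = C * C := by rw [← hC2, sq]
  exact mul_right_cancel h

lemma hBAB : B * A * B = A ^ 2 := by
  have h : A * (B * A * B) = A * A ^ 2 := by
    calc A * (B * A * B) = (A * B) * (A * B) := by simp [mul_assoc]
      _ = C * C := by rw [hAB]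
      _ = C ^ 2 := (sq C).symm
      _ = B ^ 3 := hB3C2.symm
      _ = A ^ 3 := hA3B3.symm
      _ = A * A ^ 2 := pow_succ' A 2
  exact mul_left_cancel h

lemma hABA : A * B * A = B ^ 2 := by
  have h : (A * B * A) * B = B ^ 2 * B := by
    calc (A * B * A) * B = A * (B * A * B) := by simp [mul_assoc]
      _ = A * A ^ 2 := by rw [hBAB]
      _ = A ^ 3 := (pow_succ' A 2).symm
      _ = B ^ 3 := hA3B3
      _ = B ^ 2 * B := by rw [pow_succ]
  exact mul_right_cancel h

lemma haba : (a * b * a) * (a * b * a) = a ^ 3 := by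
  calc (a * b * a) * (a * b * a) = a * (b * a ^ 2 * b) * a := by
        simp [sq, mul_assoc]
    _ = a * a * a := by rw [hr]
    _ = a ^ 3 := by rw [pow_succ, pow_succ, pow_one]

/-- The map on generators of the trefoil presentation: `a ↦ B`, `b ↦ B⁻¹A`. -/
noncomputable def fphi : Fin 2 → PresentedGroup binaryTetrahedralRels := ![B, B⁻¹ * A]

/-- The map on generators of the binary tetrahedral presentation:
`A ↦ ab`, `B ↦ a`, `C ↦ aba`. -/
noncomputable def fpsi : Fin 3 → PresentedGroup trefoilFramingThreeRels :=
  ![a * b, a, a * b * a]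

lemma hphi : ∀ r ∈ trefoilFramingThreeRels, FreeGroup.lift fphi r = 1 := by
  intro r hrm
  simp only [trefoilFramingThreeRels, Set.mem_insert_iff, Set.mem_singleton_iff] at hrm
  rcases hrm with rfl | rfl
  · simp only [map_mul, map_inv, map_pow, FreeGroup.lift_apply_of, fphi,
      Matrix.cons_val_zero, Matrix.cons_val_one, Matrix.head_cons]
    rw [mul_inv_eq_one]
    calc B * (B⁻¹ * A) * B = B⁻¹ * (B * A * B) := by simp [mul_assoc]
      _ = B⁻¹ * A ^ 2 := by rw [hBAB]
      _ = (B⁻¹ * A) * B * (B⁻¹ * A) := by simp [sq, mul_assoc]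
  · simp only [map_mul, map_inv, map_pow, FreeGroup.lift_apply_of, fphi,
      Matrix.cons_val_zero, Matrix.cons_val_one, Matrix.head_cons]
    calc B⁻¹ * (B⁻¹ * A) * B ^ 2 * (B⁻¹ * A)
        = B⁻¹ * (B⁻¹ * ((A * B * A) * (B * B⁻¹))) := by simp [sq, mul_assoc]
      _ = B⁻¹ * (B⁻¹ * (B ^ 2 * (B * B⁻¹))) := by rw [hABA]
      _ = 1 := by simp [sq, mul_assoc]

lemma hpsi : ∀ r ∈ binaryTetrahedralRels, FreeGroup.lift fpsi r = 1 := by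
  intro r hrm
  simp only [binaryTetrahedralRels, Set.mem_insert_iff, Set.mem_singleton_iff] at hrm
  have key1 : ((a * b) ^ 3 : PresentedGroup trefoilFramingThreeRels) = a ^ 3 := by
    calc (a * b) ^ 3 = (a * b * a) * (b * a * b) := by
          rw [pow_succ, pow_succ, pow_one]; simp [mul_assoc]
      _ = (a * b * a) * (a * b * a) := by rw [ht]
      _ = a ^ 3 := haba
  have key2 : ((a * b * a) ^ 2 : PresentedGroup trefoilFramingThreeRels) = a ^ 3 := by
    rw [sq]; exact haba
  rcases hrm with rfl | rfl | rfl
  · simp only [map_mul, map_inv, map_pow, FreeGroup.lift_apply_of, fpsi,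
      Matrix.cons_val_zero, Matrix.cons_val_one, Matrix.head_cons]
    rw [mul_inv_eq_one, key1]
  · simp only [map_mul, map_inv, map_pow, FreeGroup.lift_apply_of, fpsi,
      Matrix.cons_val_zero, Matrix.cons_val_one, Matrix.head_cons, Matrix.cons_val_two,
      Matrix.tail_cons]
    rw [mul_inv_eq_one, key2]
  · simp only [map_mul, map_inv, map_pow, FreeGroup.lift_apply_of, fpsi,
      Matrix.cons_val_zero, Matrix.cons_val_one, Matrix.head_cons, Matrix.cons_val_two,
      Matrix.tail_cons]
    rw [mul_inv_eq_one, key2, ← haba]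

noncomputable def phi : PresentedGroup trefoilFramingThreeRels →*
    PresentedGroup binaryTetrahedralRels := PresentedGroup.toGroup hphi

noncomputable def psi : PresentedGroup binaryTetrahedralRels →*
    PresentedGroup trefoilFramingThreeRels := PresentedGroup.toGroup hpsi

lemma psi_phi : psi.comp phi = MonoidHom.id _ := by
  apply PresentedGroup.ext
  intro x
  fin_cases x
  · show psi (phi a) = a
    rw [phi, PresentedGroup.toGroup.of]
    show psi B = a
    rw [psi, PresentedGroup.toGroup.of]
    rfl
  · show psi (phi b) = b
    rw [phi, PresentedGroup.toGroup.of]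
    show psi (B⁻¹ * A) = b
    rw [map_mul, map_inv, psi, PresentedGroup.toGroup.of, PresentedGroup.toGroup.of]
    show a⁻¹ * (a * b) = b
    simp [mul_assoc]

lemma phi_psi : phi.comp psi = MonoidHom.id _ := by
  apply PresentedGroup.ext
  intro x
  fin_cases x
  · show phi (psi A) = A
    rw [psi, PresentedGroup.toGroup.of]
    show phi (a * b) = A
    rw [map_mul, phi, PresentedGroup.toGroup.of, PresentedGroup.toGroup.of]
    show B * (B⁻¹ * A) = A
    simp [mul_assoc]
  · show phi (psi B) = B
    rw [psi, PresentedGroup.toGroup.of]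
    show phi a = B
    rw [phi, PresentedGroup.toGroup.of]
    rfl
  · show phi (psi C) = C
    rw [psi, PresentedGroup.toGroup.of]
    show phi (a * b * a) = C
    rw [map_mul, map_mul, phi, PresentedGroup.toGroup.of, PresentedGroup.toGroup.of]
    show B * (B⁻¹ * A) * B = C
    rw [show B * (B⁻¹ * A) * B = A * B by simp [mul_assoc], hAB]

end TrefSurg

/-- The group `⟨a, b | a·b·a = b·a·b, a⁻¹·b·a²·b = 1⟩` (the trefoil knot group with
the framing-3 longitude collapsed) is isomorphic to the binary tetrahedral group
`⟨A, B, C | A³ = B³ = C² = A·B·C⟩`. -/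
theorem trefoil_framing_three_iso_binary_tetrahedral :
    Nonempty (PresentedGroup trefoilFramingThreeRels ≃*
      PresentedGroup binaryTetrahedralRels) := by
  exact ⟨MonoidHom.toMulEquiv TrefSurg.phi TrefSurg.psi TrefSurg.psi_phi TrefSurg.phi_psi⟩
end

section
/- Let p, q ≥ 1, let D^p and D^q denote the closed unit balls in ℝ^p and ℝ^q, and let S^{p-1} and S^{q-1} denote the unit spheres in ℝ^p and ℝ^q. Then the subset (S^{p-1} × D^q) ∪ (D^p × S^{q-1}) of ℝ^p × ℝ^q, with the subspace topology, is homeomorphic to the unit sphere S^{p+q-1} in ℝ^{p+q}. -/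
open Metric

section SphereHomeo

variable {E F : Type*} [NormedAddCommGroup E] [NormedSpace ℝ E]
  [NormedAddCommGroup F] [NormedSpace ℝ F]

noncomputable def sphereMapCLE (e : E ≃L[ℝ] F) (x : Metric.sphere (0 : E) 1) :
    Metric.sphere (0 : F) 1 := by
  refine ⟨‖e x‖⁻¹ • e x, ?_⟩
  have hx : ‖(x : E)‖ = 1 := by simpa using x.2
  have hxne : (x : E) ≠ 0 := by
    intro h; rw [h] at hx; simp at hx
  have hne : ‖e x‖ ≠ 0 := by
    simpa [e.map_eq_zero_iff] using hxne
  rw [mem_sphere_zero_iff_norm, norm_smul, norm_inv, norm_norm,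
    inv_mul_cancel₀ hne]

lemma sphereMapCLE_apply (e : E ≃L[ℝ] F) (x : Metric.sphere (0 : E) 1) :
    (sphereMapCLE e x : F) = ‖e x‖⁻¹ • e x := rfl

lemma continuous_sphereMapCLE (e : E ≃L[ℝ] F) : Continuous (sphereMapCLE e) := by
  apply Continuous.subtype_mk
  have hc : Continuous fun x : Metric.sphere (0 : E) 1 => e x :=
    e.continuous.comp continuous_subtype_val
  refine Continuous.smul (Continuous.inv₀ hc.norm ?_) hc
  intro x
  have hx : ‖(x : E)‖ = 1 := by simpa using x.2
  have hxne : (x : E) ≠ 0 := by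
    intro h; rw [h] at hx; simp at hx
  simpa [e.map_eq_zero_iff] using hxne

lemma sphereMapCLE_symm_comp (e : E ≃L[ℝ] F) (x : Metric.sphere (0 : E) 1) :
    sphereMapCLE e.symm (sphereMapCLE e x) = x := by
  have hx : ‖(x : E)‖ = 1 := by simpa using x.2
  have hxne : (x : E) ≠ 0 := by
    intro h; rw [h] at hx; simp at hx
  have hne : ‖e x‖ ≠ 0 := by
    simpa [e.map_eq_zero_iff] using hxne
  apply Subtype.ext
  rw [sphereMapCLE_apply, sphereMapCLE_apply]
  have h1 : e.symm ((‖e x‖⁻¹ : ℝ) • e x) = ‖e x‖⁻¹ • (x : E) := by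
    rw [map_smul, e.symm_apply_apply]
  rw [h1, norm_smul, norm_inv, norm_norm, hx, mul_one, inv_inv, smul_smul,
    mul_inv_cancel₀ hne, one_smul]

noncomputable def sphereHomeoCLE (e : E ≃L[ℝ] F) :
    Metric.sphere (0 : E) 1 ≃ₜ Metric.sphere (0 : F) 1 where
  toFun := sphereMapCLE e
  invFun := sphereMapCLE e.symm
  left_inv x := sphereMapCLE_symm_comp e x
  right_inv y := by simpa using sphereMapCLE_symm_comp e.symm y
  continuous_toFun := continuous_sphereMapCLE e
  continuous_invFun := continuous_sphereMapCLE e.symm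

end SphereHomeo

/-- The subset `(S^{p-1} × D^q) ∪ (D^p × S^{q-1})` of `ℝ^p × ℝ^q`, with the subspace
topology, is homeomorphic to the unit sphere `S^{p+q-1}` in `ℝ^{p+q}`: gluing the
initial and final instances of surgery along their common boundary yields a sphere. -/
theorem union_sphere_ball_ball_sphere_homeomorph_sphere (p q : ℕ) (hp : 1 ≤ p) (hq : 1 ≤ q) :
    Nonempty
      (↥((Metric.sphere (0 : EuclideanSpace ℝ (Fin p)) 1) ×ˢ
            (Metric.closedBall (0 : EuclideanSpace ℝ (Fin q)) 1) ∪
          (Metric.closedBall (0 : EuclideanSpace ℝ (Fin p)) 1) ×ˢ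
            (Metric.sphere (0 : EuclideanSpace ℝ (Fin q)) 1)) ≃ₜ
        ↥(Metric.sphere (0 : EuclideanSpace ℝ (Fin (p + q))) 1)) := by
  set E := EuclideanSpace ℝ (Fin p)
  set F := EuclideanSpace ℝ (Fin q)
  have hset : (Metric.sphere (0 : E) 1) ×ˢ (Metric.closedBall (0 : F) 1) ∪
      (Metric.closedBall (0 : E) 1) ×ˢ (Metric.sphere (0 : F) 1) =
      Metric.sphere (0 : E × F) 1 := by
    ext ⟨x, y⟩
    simp only [Set.mem_union, Set.mem_prod, mem_sphere_zero_iff_norm,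
      Metric.mem_closedBall, dist_zero_right, Prod.norm_def]
    constructor
    · rintro (⟨h1, h2⟩ | ⟨h1, h2⟩)
      · rw [max_eq_left (h2.trans_eq h1.symm), h1]
      · rw [max_eq_right (h1.trans_eq h2.symm), h2]
    · intro h
      rcases le_total ‖x‖ ‖y‖ with hle | hle
      · right
        rw [max_eq_right hle] at h
        exact ⟨h ▸ hle, h⟩
      · left
        rw [max_eq_left hle] at h
        exact ⟨h, h ▸ hle⟩
  have hfr : Module.finrank ℝ (E × F) = Module.finrank ℝ (EuclideanSpace ℝ (Fin (p + q))) := by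
    rw [Module.finrank_prod, finrank_euclideanSpace_fin, finrank_euclideanSpace_fin,
      finrank_euclideanSpace_fin]
  let e : (E × F) ≃L[ℝ] EuclideanSpace ℝ (Fin (p + q)) :=
    ContinuousLinearEquiv.ofFinrankEq hfr
  exact ⟨(Homeomorph.setCongr hset).trans (sphereHomeoCLE e)⟩
end
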